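/- Let 0 < α < 1, ε > 0, and let c : ℕ → ℝ be such that the squared sequence is nonincreasing ((c (i+1))² ≤ (c i)² for all i), Σ'_i ((c i)²)^α < ∞ (summable), and Σ'_i (c i)² < ∞ (summable). If the natural number K ≥ 1 satisfies K ≥ exp(S^α(c)) · (2α/((1−α)·ε²))^{α/(1−α)}, then 2 · Σ'_{i : ℕ} (c (K + i))² ≤ ε². In other words, retaining the K largest Pauli coefficients with K at least exp(S^α(c)) · (2α/((1−α)ε²))^{α/(1−α)} guarantees truncation error √(2Δ(K)) ≤ ε. -/

import Mathlib

/-- Operator Stabilizer Rényi entropy of a (countable) family of real Pauli coefficients. -/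
noncomputable def OSE (α : ℝ) (c : ℕ → ℝ) : ℝ :=
  (1 / (1 - α)) * Real.log (∑' i, ((c i) ^ 2) ^ α)

/-- Resource prescription: if `K ≥ exp(Sᵅ(c)) · (2α/((1-α)ε²))^{α/(1-α)}`, then the
Top-`K` truncation tail satisfies `2 Δ(K) ≤ ε²`. -/
theorem topK_budget_from_entropy (α : ℝ) (hα0 : 0 < α) (hα1 : α < 1)
    (ε : ℝ) (hε : 0 < ε)
    (c : ℕ → ℝ) (hmono : ∀ i, (c (i + 1)) ^ 2 ≤ (c i) ^ 2)
    (hsumα : Summable fun i => ((c i) ^ 2) ^ α)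
    (hsum : Summable fun i => (c i) ^ 2)
    (K : ℕ) (hK1 : 1 ≤ K)
    (hK : Real.exp (OSE α c) * (2 * α / ((1 - α) * ε ^ 2)) ^ (α / (1 - α)) ≤ (K : ℝ)) :
    2 * (∑' i, (c (K + i)) ^ 2) ≤ ε ^ 2 := by
  have h1α : (0:ℝ) < 1 - α := by linarith
  set A : ℝ := ∑' i, ((c i) ^ 2) ^ α with hA
  have hterm_nonneg : ∀ i, (0:ℝ) ≤ ((c i) ^ 2) ^ α := fun i =>
    Real.rpow_nonneg (sq_nonneg _) _
  have hta : Summable fun i => (c (K + i)) ^ 2 := by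
    have := (summable_nat_add_iff K).2 hsum
    simpa [add_comm] using this
  have htail_nonneg : ∀ i, (0:ℝ) ≤ (c (K + i)) ^ 2 := fun i => sq_nonneg _
  -- case A = 0
  rcases eq_or_lt_of_le (tsum_nonneg hterm_nonneg : (0:ℝ) ≤ A) with hA0 | hA0
  · have hzero : ∀ i, (c i) ^ 2 = 0 := by
      intro i
      have hle : ((c i) ^ 2) ^ α ≤ A := Summable.le_tsum hsumα i (fun j _ => hterm_nonneg j)
      have : ((c i) ^ 2) ^ α = 0 := le_antisymm (hle.trans_eq hA0.symm) (hterm_nonneg i)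
      have := (Real.rpow_eq_zero_iff_of_nonneg (sq_nonneg _)).1 this
      exact this.1
    have : (∑' i, (c (K + i)) ^ 2) = 0 := by
      simp [hzero]
    rw [this]; nlinarith
  -- main case A > 0
  have hantitone : Antitone (fun n => (c n) ^ 2) := antitone_nat_of_succ_le hmono
  -- step 1: (i+1) * ((c i)^2)^α ≤ A
  have h1 : ∀ i : ℕ, ((i:ℝ) + 1) * ((c i) ^ 2) ^ α ≤ A := by
    intro i
    have hsumle : ∑ j ∈ Finset.range (i + 1), ((c j) ^ 2) ^ α ≤ A :=
      Summable.sum_le_tsum _ (fun j _ => hterm_nonneg j) hsumα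
    have hge : ∀ j ∈ Finset.range (i + 1), ((c i) ^ 2) ^ α ≤ ((c j) ^ 2) ^ α := by
      intro j hj
      exact Real.rpow_le_rpow (sq_nonneg _) (hantitone (by
        exact Nat.lt_succ_iff.1 (Finset.mem_range.1 hj))) hα0.le
    have := Finset.sum_le_sum hge
    simp only [Finset.sum_const, Finset.card_range, nsmul_eq_mul] at this
    calc ((i:ℝ) + 1) * ((c i) ^ 2) ^ α = ((i + 1 : ℕ) : ℝ) * ((c i) ^ 2) ^ α := by push_cast; ring
      _ ≤ ∑ j ∈ Finset.range (i + 1), ((c j) ^ 2) ^ α := this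
      _ ≤ A := hsumle
  -- step 2: (c i)^2 ≤ (A / (i+1))^(α⁻¹)
  have h2 : ∀ i : ℕ, (c i) ^ 2 ≤ (A / ((i:ℝ) + 1)) ^ (α⁻¹) := by
    intro i
    have hi1 : (0:ℝ) < (i:ℝ) + 1 := by positivity
    have hle : ((c i) ^ 2) ^ α ≤ A / ((i:ℝ) + 1) := by
      rw [le_div_iff₀ hi1]; linarith [h1 i]
    calc (c i) ^ 2 = (((c i) ^ 2) ^ α) ^ (α⁻¹) := by
          rw [Real.rpow_rpow_inv (sq_nonneg _) hα0.ne']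
      _ ≤ (A / ((i:ℝ) + 1)) ^ (α⁻¹) :=
          Real.rpow_le_rpow (hterm_nonneg i) hle (by positivity)
  -- setup exponents
  set β : ℝ := 1 - α⁻¹ with hβ
  have hαinv : (1:ℝ) < α⁻¹ := (one_lt_inv₀ hα0).2 hα1
  have hβneg : β < 0 := by simp only [hβ]; linarith
  set g : ℕ → ℝ := fun i => ((K:ℝ) + i) ^ β with hg
  have hKpos : (1:ℝ) ≤ (K:ℝ) := by exact_mod_cast hK1
  have hxpos : ∀ i : ℕ, (1:ℝ) ≤ (K:ℝ) + i := fun i => by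
    have : (0:ℝ) ≤ (i:ℝ) := Nat.cast_nonneg i
    linarith
  -- MVT step
  have hMVT : ∀ i : ℕ, ((K:ℝ) + i + 1) ^ (-α⁻¹) ≤ (α / (1 - α)) * (g i - g (i + 1)) := by
    intro i
    set x : ℝ := (K:ℝ) + i with hx
    have hx1 : (1:ℝ) ≤ x := hxpos i
    have hx0 : (0:ℝ) < x := by linarith
    have hcont : ContinuousOn (fun t : ℝ => t ^ β) (Set.Icc x (x + 1)) := by
      apply ContinuousOn.rpow_const continuousOn_id
      intro t ht
      left
      intro h0
      simp only [id_eq] at h0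
      have := ht.1
      rw [h0] at this
      linarith
    have hderiv : ∀ t ∈ Set.Ioo x (x + 1),
        HasDerivAt (fun t : ℝ => t ^ β) (β * t ^ (β - 1)) t := by
      intro t ht
      exact Real.hasDerivAt_rpow_const (Or.inl (by linarith [ht.1] : t ≠ 0))
    obtain ⟨ξ, hξ, hslope⟩ := exists_hasDerivAt_eq_slope (fun t : ℝ => t ^ β)
      (fun t => β * t ^ (β - 1)) (by linarith : x < x + 1) hcont hderiv
    have hslope' : β * ξ ^ (β - 1) = (x + 1) ^ β - x ^ β := by
      rw [hslope]; simp
    have hξ0 : (0:ℝ) < ξ := by linarith [hξ.1]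
    have hgdiff : g i - g (i + 1) = x ^ β - (x + 1) ^ β := by
      simp only [hg, hx]; push_cast; ring_nf
    have hkey : (α / (1 - α)) * (g i - g (i + 1)) = ξ ^ (β - 1) := by
      have hdiff : x ^ β - (x + 1) ^ β = -β * ξ ^ (β - 1) := by
        rw [neg_mul]; linarith [hslope']
      rw [hgdiff, hdiff]
      have hne : (1:ℝ) - α ≠ 0 := by linarith
      rw [hβ]
      field_simp
      ring
    rw [hkey]
    have hβ1 : β - 1 = -α⁻¹ := by rw [hβ]; ring
    rw [hβ1]
    exact Real.rpow_le_rpow_of_nonpos hξ0 (by linarith [hξ.2]) (by linarith)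
  -- telescoping sum
  have hgnonneg : ∀ i, 0 ≤ g i := fun i => Real.rpow_nonneg (by linarith [hxpos i]) _
  have hgstep : ∀ i, 0 ≤ g i - g (i + 1) := by
    intro i
    have : ((K:ℝ) + (i + 1)) ^ β ≤ ((K:ℝ) + i) ^ β := by
      apply Real.rpow_le_rpow_of_nonpos (by linarith [hxpos i]) (by push_cast; linarith) hβneg.le
    simpa [hg] using this
  have hgtend : Filter.Tendsto g Filter.atTop (nhds 0) := by
    have h1 : Filter.Tendsto (fun i : ℕ => (K:ℝ) + i) Filter.atTop Filter.atTop :=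
      Filter.tendsto_atTop_add_const_left _ _ tendsto_natCast_atTop_atTop
    have h2 : Filter.Tendsto (fun y : ℝ => y ^ (-(-β))) Filter.atTop (nhds 0) :=
      tendsto_rpow_neg_atTop (by linarith)
    simpa [hg, Function.comp_def] using h2.comp h1
  have hpartial : ∀ n, ∑ i ∈ Finset.range n, (g i - g (i + 1)) = g 0 - g n :=
    fun n => Finset.sum_range_sub' g n
  have hgsummable : Summable (fun i => g i - g (i + 1)) := by
    apply summable_of_sum_range_le (c := g 0) hgstep
    intro n
    rw [hpartial n]
    linarith [hgnonneg n]
  have hgtsum : ∑' i, (g i - g (i + 1)) = g 0 := by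
    have ht1 : Filter.Tendsto (fun n => ∑ i ∈ Finset.range n, (g i - g (i + 1)))
        Filter.atTop (nhds (∑' i, (g i - g (i + 1)))) := hgsummable.hasSum.tendsto_sum_nat
    have ht2 : Filter.Tendsto (fun n => ∑ i ∈ Finset.range n, (g i - g (i + 1)))
        Filter.atTop (nhds (g 0)) := by
      simp only [hpartial]
      simpa using (tendsto_const_nhds.sub hgtend)
    exact tendsto_nhds_unique ht1 ht2
  set Aa : ℝ := A ^ (α⁻¹) with hAa
  have hAapos : 0 < Aa := Real.rpow_pos_of_pos hA0 _
  -- step 3: pointwise tail bound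
  have h3 : ∀ i : ℕ, (c (K + i)) ^ 2 ≤ Aa * ((α / (1 - α)) * (g i - g (i + 1))) := by
    intro i
    have hx1 : (1:ℝ) ≤ (K:ℝ) + i := hxpos i
    have h2' : (c (K + i)) ^ 2 ≤ (A / ((K:ℝ) + i + 1)) ^ (α⁻¹) := by
      have := h2 (K + i)
      have hcast : ((K + i : ℕ) : ℝ) + 1 = (K:ℝ) + i + 1 := by push_cast; ring
      rwa [hcast] at this
    have hsplit : (A / ((K:ℝ) + i + 1)) ^ (α⁻¹) = Aa * ((K:ℝ) + i + 1) ^ (-α⁻¹) := by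
      rw [Real.div_rpow hA0.le (by linarith), Real.rpow_neg (by linarith), div_eq_mul_inv]
    calc (c (K + i)) ^ 2 ≤ (A / ((K:ℝ) + i + 1)) ^ (α⁻¹) := h2'
      _ = Aa * ((K:ℝ) + i + 1) ^ (-α⁻¹) := hsplit
      _ ≤ Aa * ((α / (1 - α)) * (g i - g (i + 1))) :=
          mul_le_mul_of_nonneg_left (hMVT i) hAapos.le
  have hRHSsummable : Summable (fun i => Aa * ((α / (1 - α)) * (g i - g (i + 1)))) :=
    (hgsummable.mul_left _).mul_left _
  have htail : (∑' i, (c (K + i)) ^ 2) ≤ Aa * ((α / (1 - α)) * g 0) := by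
    calc (∑' i, (c (K + i)) ^ 2)
        ≤ ∑' i, Aa * ((α / (1 - α)) * (g i - g (i + 1))) := Summable.tsum_le_tsum h3 hta hRHSsummable
      _ = Aa * ((α / (1 - α)) * ∑' i, (g i - g (i + 1))) := by
          rw [tsum_mul_left, tsum_mul_left]
      _ = Aa * ((α / (1 - α)) * g 0) := by rw [hgtsum]
  have hg0 : g 0 = (K:ℝ) ^ β := by simp [hg]
  -- exponent bookkeeping
  set r : ℝ := (1 - α) / α with hr
  have hrpos : 0 < r := by positivity
  have hβr : β = -r := by rw [hβ, hr]; field_simp; ring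
  have hKR : (0:ℝ) < (K:ℝ) := by linarith
  set P : ℝ := (K:ℝ) ^ r with hP
  have hPpos : 0 < P := Real.rpow_pos_of_pos hKR _
  -- rewrite the entropy term
  have hexp : Real.exp (OSE α c) = A ^ (1 / (1 - α)) := by
    rw [OSE, Real.rpow_def_of_pos hA0, mul_comm]
  set B : ℝ := 2 * α / ((1 - α) * ε ^ 2) with hB
  have hBpos : 0 < B := by positivity
  have hKr : Aa * B ≤ P := by
    have h0 : (0:ℝ) ≤ A ^ (1 / (1 - α)) * B ^ (α / (1 - α)) := by positivity
    have hK' : A ^ (1 / (1 - α)) * B ^ (α / (1 - α)) ≤ (K:ℝ) := by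
      rw [hexp] at hK; exact hK
    have := Real.rpow_le_rpow h0 hK' hrpos.le
    rw [Real.mul_rpow (by positivity) (by positivity), ← Real.rpow_mul hA0.le,
      ← Real.rpow_mul hBpos.le] at this
    have he1 : 1 / (1 - α) * r = α⁻¹ := by rw [hr]; field_simp
    have he2 : α / (1 - α) * r = 1 := by rw [hr]; field_simp
    rw [he1, he2, Real.rpow_one] at this
    exact this
  have hkey2 : Aa * (2 * α) ≤ P * ((1 - α) * ε ^ 2) := by
    have hmul := mul_le_mul_of_nonneg_right hKr (show (0:ℝ) ≤ (1 - α) * ε ^ 2 by positivity)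
    calc Aa * (2 * α) = Aa * B * ((1 - α) * ε ^ 2) := by
          rw [hB]; field_simp
      _ ≤ P * ((1 - α) * ε ^ 2) := hmul
  have hgβ : (K:ℝ) ^ β = P⁻¹ := by
    rw [hβr, Real.rpow_neg hKR.le, hP]
  calc 2 * (∑' i, (c (K + i)) ^ 2)
      ≤ 2 * (Aa * ((α / (1 - α)) * g 0)) := by linarith
    _ = Aa * (2 * α) / ((1 - α) * P) := by
        rw [hg0, hgβ]; field_simp
    _ ≤ ε ^ 2 := by
        rw [div_le_iff₀ (by positivity)]
        nlinarith [hkey2]
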